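/- Let R be a complete discrete valuation ring with maximal ideal 𝔭 and finite residue field k of characteristic 2. Let G² ⊂ GL₂(R) be the subgroup of matrices congruent to the identity modulo 𝔭², and let H be a subgroup of GL₂(R) contained in GL₂(k)·G^{2−}, where G^{2−} is the set of matrices congruent to the identity mod 𝔭 and to a scalar mod 𝔭². Then the map f : H → 𝔭²/𝔭³ sending h = γ·g₂·(1+ϖx) (with γ ∈ GL₂(k) ⊂ GL₂(R) via the Teichmüller lift, g₂ ∈ G², x ∈ R, ϖ a uniformizer) to Tr(g₂ − Id₂) mod 𝔭³ is a well-defined group homomorphism. -/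

import Mathlib

open Matrix IsLocalRing

private lemma aux_mul_mem_left {R : Type*} [CommRing R] {I : Ideal R} {n : Type*} [Fintype n]
    {A B : Matrix n n R} (hB : ∀ i j, B i j ∈ I) (i j : n) : (A * B) i j ∈ I := by
  rw [Matrix.mul_apply]
  exact Ideal.sum_mem _ fun l _ => I.mul_mem_left _ (hB l j)

private lemma aux_mul_mem_right {R : Type*} [CommRing R] {I : Ideal R} {n : Type*} [Fintype n]
    {A B : Matrix n n R} (hA : ∀ i j, A i j ∈ I) (i j : n) : (A * B) i j ∈ I := by
  rw [Matrix.mul_apply]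
  exact Ideal.sum_mem _ fun l _ => I.mul_mem_right _ (hA i l)

private lemma aux_mul_mem_mul {R : Type*} [CommRing R] {I J : Ideal R} {n : Type*} [Fintype n]
    {A B : Matrix n n R} (hA : ∀ i j, A i j ∈ I) (hB : ∀ i j, B i j ∈ J) (i j : n) :
    (A * B) i j ∈ I * J := by
  rw [Matrix.mul_apply]
  exact Ideal.sum_mem _ fun l _ => Ideal.mul_mem_mul (hA i l) (hB l j)

private lemma aux_trace_mem {R : Type*} [CommRing R] {I : Ideal R} {n : Type*} [Fintype n]
    {A : Matrix n n R} (hA : ∀ i j, A i j ∈ I) : A.trace ∈ I := by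
  rw [Matrix.trace]
  exact Ideal.sum_mem _ fun i _ => hA i i

/-- `h` decomposes as `γ·g₂·(1+ϖx)` with `γ ∈ GL₂(k)` (embedded via the splitting `s`),
`g₂ ≡ Id mod 𝔭²`, and `x ∈ R`. -/
def IsDecomp (R : Type*) [CommRing R] [IsDomain R] [IsDiscreteValuationRing R]
    (k : Type*) [Field k] (s : k →+* R) (ϖ : R) (h : GL (Fin 2) R)
    (γ : GL (Fin 2) k) (g₂ : GL (Fin 2) R) (x : R) : Prop :=
  (∀ i j, ((g₂ : Matrix (Fin 2) (Fin 2) R) - 1) i j ∈ IsLocalRing.maximalIdeal R ^ 2) ∧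
  (h : Matrix (Fin 2) (Fin 2) R) =
    ((γ : Matrix (Fin 2) (Fin 2) k).map s) * (g₂ : Matrix (Fin 2) (Fin 2) R) *
      ((1 + ϖ * x) • (1 : Matrix (Fin 2) (Fin 2) R))

/-- Lemma 3.12 of the paper: for a complete discrete valuation ring `R` of residue
characteristic `2` with finite residue field `k`, a Teichmüller splitting `s : k → R`,
and a subgroup `H ⊆ GL₂(k)·G^{2−}` of `GL₂(R)`, the map `h = γ·g₂·(1+ϖx) ↦
Tr(g₂ − Id) mod 𝔭³` is a well-defined homomorphism `H → 𝔭²/𝔭³`. -/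
theorem stmt10 (R : Type*) [CommRing R] [IsDomain R] [IsDiscreteValuationRing R]
    [IsAdicComplete (IsLocalRing.maximalIdeal R) R]
    (k : Type*) [Field k] [Fintype k] (hchar : CharP k 2)
    (π : R →+* k) (hπ : Function.Surjective π)
    (hπker : RingHom.ker π = IsLocalRing.maximalIdeal R)
    (s : k →+* R) (hs : ∀ c : k, π (s c) = c)
    (ϖ : R) (hϖ : Irreducible ϖ)
    (H : Subgroup (GL (Fin 2) R))
    (hH : ∀ h ∈ H, ∃ (γ : GL (Fin 2) k) (g₂ : GL (Fin 2) R) (x : R),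
      IsDecomp R k s ϖ h γ g₂ x) :
    ∃ f : GL (Fin 2) R → R ⧸ (IsLocalRing.maximalIdeal R ^ 3),
      (∀ h ∈ H, ∀ (γ : GL (Fin 2) k) (g₂ : GL (Fin 2) R) (x : R),
        IsDecomp R k s ϖ h γ g₂ x →
        f h = Ideal.Quotient.mk (IsLocalRing.maximalIdeal R ^ 3)
          (Matrix.trace ((g₂ : Matrix (Fin 2) (Fin 2) R) - 1))) ∧
      (∀ h ∈ H, ∃ y ∈ IsLocalRing.maximalIdeal R ^ 2,
        f h = Ideal.Quotient.mk (IsLocalRing.maximalIdeal R ^ 3) y) ∧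
      (∀ h ∈ H, ∀ h' ∈ H, f (h * h') = f h + f h') := by
  classical
  set I := IsLocalRing.maximalIdeal R with hIdef
  -- basic facts
  have hϖmem : ϖ ∈ I := (IsLocalRing.mem_maximalIdeal ϖ).mpr hϖ.not_isUnit
  have hπϖ : π ϖ = 0 := by
    rw [← RingHom.mem_ker, hπker]; exact hϖmem
  have h2R : (2 : R) = 0 := by
    have h2k : ((2 : ℕ) : k) = 0 := (@CharP.cast_eq_zero_iff k _ 2 hchar 2).mpr dvd_rfl
    have hsc : s ((2 : ℕ) : k) = ((2 : ℕ) : R) := map_natCast s 2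
    rw [h2k, map_zero] at hsc
    exact_mod_cast hsc.symm
  have hI2 : I ^ 2 ≤ I := Ideal.pow_le_self two_ne_zero
  have hI43 : I ^ 2 * I ^ 2 ≤ I ^ 3 := by
    rw [← pow_add]
    exact Ideal.pow_le_pow_right (by norm_num)
  -- reduction mod 𝔭 of a G²-element is the identity
  have hmapg : ∀ (g : GL (Fin 2) R), (∀ i j, ((g : Matrix (Fin 2) (Fin 2) R) - 1) i j ∈ I ^ 2) →
      ((g : Matrix (Fin 2) (Fin 2) R)).map π = 1 := by
    intro g hg
    ext i j
    have h1 : π (((g : Matrix (Fin 2) (Fin 2) R) - 1) i j) = 0 := by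
      rw [← RingHom.mem_ker, hπker]; exact hI2 (hg i j)
    rw [Matrix.sub_apply, map_sub, sub_eq_zero] at h1
    rw [Matrix.map_apply, h1]
    simp [Matrix.one_apply, apply_ite π]
  -- reduction mod 𝔭 of a scalar matrix
  have hmapsc : ∀ c : R, ((c • (1 : Matrix (Fin 2) (Fin 2) R)).map π)
      = π c • (1 : Matrix (Fin 2) (Fin 2) k) := by
    intro c
    ext i j
    simp [Matrix.map_apply, Matrix.one_apply, apply_ite π, mul_ite, mul_one, mul_zero,
      Matrix.smul_apply, smul_eq_mul]
  -- reduction mod 𝔭 of an embedded GL₂(k) element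
  have hmapγ : ∀ (γ : GL (Fin 2) k),
      (((γ : Matrix (Fin 2) (Fin 2) k)).map s).map π = (γ : Matrix (Fin 2) (Fin 2) k) := by
    intro γ
    ext i j
    simp [Matrix.map_apply, hs]
  -- the scalar 1 + ϖx is a unit
  have hunit : ∀ x : R, IsUnit (1 + ϖ * x) := by
    intro x
    have hm : -(ϖ * x) ∈ IsLocalRing.maximalIdeal R := neg_mem (Ideal.mul_mem_right _ _ hϖmem)
    have := IsLocalRing.isUnit_one_sub_self_of_mem_nonunits _
      ((IsLocalRing.mem_maximalIdeal _).mp hm)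
    simpa [sub_neg_eq_add] using this
  -- well-definedness
  have key : ∀ (h : GL (Fin 2) R) (γ : GL (Fin 2) k) (g₂ : GL (Fin 2) R) (x : R)
      (γ' : GL (Fin 2) k) (g₂' : GL (Fin 2) R) (x' : R),
      IsDecomp R k s ϖ h γ g₂ x → IsDecomp R k s ϖ h γ' g₂' x' →
      Ideal.Quotient.mk (I ^ 3) (Matrix.trace ((g₂ : Matrix (Fin 2) (Fin 2) R) - 1))
        = Ideal.Quotient.mk (I ^ 3) (Matrix.trace ((g₂' : Matrix (Fin 2) (Fin 2) R) - 1)) := by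
    intro h γ g₂ x γ' g₂' x' hd hd'
    obtain ⟨hg, he⟩ := hd
    obtain ⟨hg', he'⟩ := hd'
    have heq : ((γ : Matrix (Fin 2) (Fin 2) k).map s) * (g₂ : Matrix (Fin 2) (Fin 2) R) *
        ((1 + ϖ * x) • (1 : Matrix (Fin 2) (Fin 2) R))
        = ((γ' : Matrix (Fin 2) (Fin 2) k).map s) * (g₂' : Matrix (Fin 2) (Fin 2) R) *
        ((1 + ϖ * x') • (1 : Matrix (Fin 2) (Fin 2) R)) := he.symm.trans he'
    -- γ = γ'
    have hγγ' : γ = γ' := by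
      apply Units.ext
      have hm := congrArg (fun M => M.map (π : R → k)) heq
      simp only [Matrix.map_mul] at hm
      rw [hmapγ, hmapγ, hmapg g₂ hg, hmapg g₂' hg', hmapsc, hmapsc] at hm
      have hπu : π (1 + ϖ * x) = 1 := by simp [hπϖ]
      have hπu' : π (1 + ϖ * x') = 1 := by simp [hπϖ]
      simpa [hπu, hπu'] using hm
    subst hγγ'
    -- cancel γ
    set Γ : GL (Fin 2) R := Units.map (s.mapMatrix.toMonoidHom) γ with hΓdef
    have hΓ : (Γ : Matrix (Fin 2) (Fin 2) R) = (γ : Matrix (Fin 2) (Fin 2) k).map s := rfl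
    have hcan : (g₂ : Matrix (Fin 2) (Fin 2) R) * ((1 + ϖ * x) • (1 : Matrix (Fin 2) (Fin 2) R))
        = (g₂' : Matrix (Fin 2) (Fin 2) R) * ((1 + ϖ * x') • (1 : Matrix (Fin 2) (Fin 2) R)) := by
      have h2 := congrArg (fun M => ((Γ⁻¹ : GL (Fin 2) R) : Matrix (Fin 2) (Fin 2) R) * M) heq
      simp only [← mul_assoc, ← hΓ] at h2
      have hinv : ((Γ⁻¹ : GL (Fin 2) R) : Matrix (Fin 2) (Fin 2) R)
          * (Γ : Matrix (Fin 2) (Fin 2) R) = 1 := Units.inv_mul Γ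
      rw [hinv, one_mul, one_mul] at h2
      exact h2
    have hsmul : (1 + ϖ * x) • (g₂ : Matrix (Fin 2) (Fin 2) R)
        = (1 + ϖ * x') • (g₂' : Matrix (Fin 2) (Fin 2) R) := by
      simpa only [Matrix.mul_smul, mul_one] using hcan
    -- the scalars agree mod 𝔭²
    have ha : (g₂ : Matrix (Fin 2) (Fin 2) R) 0 0 - 1 ∈ I ^ 2 := by
      simpa [Matrix.sub_apply, Matrix.one_apply] using hg 0 0
    have ha' : (g₂' : Matrix (Fin 2) (Fin 2) R) 0 0 - 1 ∈ I ^ 2 := by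
      simpa [Matrix.sub_apply, Matrix.one_apply] using hg' 0 0
    have h00 : (1 + ϖ * x) * ((g₂ : Matrix (Fin 2) (Fin 2) R) 0 0)
        = (1 + ϖ * x') * ((g₂' : Matrix (Fin 2) (Fin 2) R) 0 0) := by
      have := congrFun (congrFun hsmul 0) 0
      simpa [Matrix.smul_apply, smul_eq_mul] using this
    have hδ : (1 + ϖ * x') - (1 + ϖ * x) ∈ I ^ 2 := by
      have hid : (1 + ϖ * x') - (1 + ϖ * x)
          = (1 + ϖ * x) * ((g₂ : Matrix (Fin 2) (Fin 2) R) 0 0 - 1)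
            - (1 + ϖ * x') * ((g₂' : Matrix (Fin 2) (Fin 2) R) 0 0 - 1) := by
        rw [mul_sub, mul_sub, h00]; ring
      rw [hid]
      exact sub_mem (Ideal.mul_mem_left _ _ ha) (Ideal.mul_mem_left _ _ ha')
    -- traces
    have hcard : ((Fintype.card (Fin 2) : ℕ) : R) = 0 := by
      simp only [Fintype.card_fin, Nat.cast_ofNat, h2R]
    have htrg : ∀ (g : GL (Fin 2) R), Matrix.trace (g : Matrix (Fin 2) (Fin 2) R)
        = Matrix.trace ((g : Matrix (Fin 2) (Fin 2) R) - 1) := by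
      intro g
      rw [Matrix.trace_sub, Matrix.trace_one, hcard, sub_zero]
    have htr : (1 + ϖ * x) * Matrix.trace ((g₂ : Matrix (Fin 2) (Fin 2) R) - 1)
        = (1 + ϖ * x') * Matrix.trace ((g₂' : Matrix (Fin 2) (Fin 2) R) - 1) := by
      have := congrArg Matrix.trace hsmul
      rw [Matrix.trace_smul, Matrix.trace_smul, smul_eq_mul, smul_eq_mul, htrg, htrg] at this
      exact this
    have hT' : Matrix.trace ((g₂' : Matrix (Fin 2) (Fin 2) R) - 1) ∈ I ^ 2 := aux_trace_mem hg'
    have h4 : (1 + ϖ * x) * (Matrix.trace ((g₂ : Matrix (Fin 2) (Fin 2) R) - 1)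
        - Matrix.trace ((g₂' : Matrix (Fin 2) (Fin 2) R) - 1)) ∈ I ^ 3 := by
      have hid : (1 + ϖ * x) * (Matrix.trace ((g₂ : Matrix (Fin 2) (Fin 2) R) - 1)
          - Matrix.trace ((g₂' : Matrix (Fin 2) (Fin 2) R) - 1))
          = ((1 + ϖ * x') - (1 + ϖ * x)) * Matrix.trace ((g₂' : Matrix (Fin 2) (Fin 2) R) - 1) := by
        rw [mul_sub, htr]; ring
      rw [hid]
      exact hI43 (Ideal.mul_mem_mul hδ hT')
    obtain ⟨v, hv⟩ := hunit x
    have hdiff : Matrix.trace ((g₂ : Matrix (Fin 2) (Fin 2) R) - 1)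
        - Matrix.trace ((g₂' : Matrix (Fin 2) (Fin 2) R) - 1) ∈ I ^ 3 := by
      have hid : Matrix.trace ((g₂ : Matrix (Fin 2) (Fin 2) R) - 1)
          - Matrix.trace ((g₂' : Matrix (Fin 2) (Fin 2) R) - 1)
          = (↑v⁻¹ : R) * ((1 + ϖ * x) * (Matrix.trace ((g₂ : Matrix (Fin 2) (Fin 2) R) - 1)
            - Matrix.trace ((g₂' : Matrix (Fin 2) (Fin 2) R) - 1))) := by
        rw [← hv, ← mul_assoc, Units.inv_mul, one_mul]
      rw [hid]
      exact Ideal.mul_mem_left _ _ h4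
    exact (Ideal.Quotient.mk_eq_mk_iff_sub_mem _ _).mpr hdiff
  -- product decomposition
  have mul_decomp : ∀ (h h' : GL (Fin 2) R) (γ γ' : GL (Fin 2) k) (g₂ g₂' : GL (Fin 2) R)
      (x x' : R), IsDecomp R k s ϖ h γ g₂ x → IsDecomp R k s ϖ h' γ' g₂' x' →
      ∃ g'' : GL (Fin 2) R, IsDecomp R k s ϖ (h * h') (γ * γ') g'' (x + x' + ϖ * (x * x')) ∧
        Matrix.trace ((g'' : Matrix (Fin 2) (Fin 2) R) - 1)
          - (Matrix.trace ((g₂ : Matrix (Fin 2) (Fin 2) R) - 1)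
            + Matrix.trace ((g₂' : Matrix (Fin 2) (Fin 2) R) - 1)) ∈ I ^ 3 := by
    intro h h' γ γ' g₂ g₂' x x' hd hd'
    obtain ⟨hg, he⟩ := hd
    obtain ⟨hg', he'⟩ := hd'
    set Γ' : GL (Fin 2) R := Units.map (s.mapMatrix.toMonoidHom) γ' with hΓ'def
    set B : Matrix (Fin 2) (Fin 2) R := ((Γ' : Matrix (Fin 2) (Fin 2) R)) with hBdef
    set C : Matrix (Fin 2) (Fin 2) R := (((Γ'⁻¹ : GL (Fin 2) R)) : Matrix (Fin 2) (Fin 2) R)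
      with hCdef
    have hB : B = (γ' : Matrix (Fin 2) (Fin 2) k).map s := rfl
    have hBC : B * C = 1 := Units.mul_inv Γ'
    have hCB : C * B = 1 := Units.inv_mul Γ'
    refine ⟨Γ'⁻¹ * g₂ * Γ' * g₂', ⟨?_, ?_⟩, ?_⟩
    · -- entries in 𝔭²
      intro i j
      have hval : ((Γ'⁻¹ * g₂ * Γ' * g₂' : GL (Fin 2) R) : Matrix (Fin 2) (Fin 2) R)
          = C * (g₂ : Matrix (Fin 2) (Fin 2) R) * B * (g₂' : Matrix (Fin 2) (Fin 2) R) := rfl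
      have e1 : C * (g₂ : Matrix (Fin 2) (Fin 2) R) * B
          = C * ((g₂ : Matrix (Fin 2) (Fin 2) R) - 1) * B + 1 := by
        rw [mul_sub, mul_one, sub_mul, hCB, sub_add_cancel]
      have e2 : ((Γ'⁻¹ * g₂ * Γ' * g₂' : GL (Fin 2) R) : Matrix (Fin 2) (Fin 2) R) - 1
          = C * ((g₂ : Matrix (Fin 2) (Fin 2) R) - 1) * B * (g₂' : Matrix (Fin 2) (Fin 2) R)
            + ((g₂' : Matrix (Fin 2) (Fin 2) R) - 1) := by
        rw [hval, e1, add_mul, one_mul, add_sub_assoc]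
      rw [e2, Matrix.add_apply]
      exact Ideal.add_mem _
        (aux_mul_mem_right (aux_mul_mem_right (aux_mul_mem_left hg) ) i j) (hg' i j)
    · -- the product identity
      have hval : ((Γ'⁻¹ * g₂ * Γ' * g₂' : GL (Fin 2) R) : Matrix (Fin 2) (Fin 2) R)
          = C * (g₂ : Matrix (Fin 2) (Fin 2) R) * B * (g₂' : Matrix (Fin 2) (Fin 2) R) := rfl
      have hγmul : ((γ * γ' : GL (Fin 2) k) : Matrix (Fin 2) (Fin 2) k).map s
          = ((γ : Matrix (Fin 2) (Fin 2) k).map s) * ((γ' : Matrix (Fin 2) (Fin 2) k).map s) := by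
        rw [Units.val_mul, Matrix.map_mul]
      have hmat : ((γ : Matrix (Fin 2) (Fin 2) k).map s) * (g₂ : Matrix (Fin 2) (Fin 2) R)
            * (B * (g₂' : Matrix (Fin 2) (Fin 2) R))
          = (((γ : Matrix (Fin 2) (Fin 2) k).map s) * B)
            * (C * (g₂ : Matrix (Fin 2) (Fin 2) R) * B * (g₂' : Matrix (Fin 2) (Fin 2) R)) := by
        calc ((γ : Matrix (Fin 2) (Fin 2) k).map s) * (g₂ : Matrix (Fin 2) (Fin 2) R)
              * (B * (g₂' : Matrix (Fin 2) (Fin 2) R))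
            = ((γ : Matrix (Fin 2) (Fin 2) k).map s) * ((B * C) * (g₂ : Matrix (Fin 2) (Fin 2) R))
              * (B * (g₂' : Matrix (Fin 2) (Fin 2) R)) := by rw [hBC, one_mul]
          _ = _ := by simp only [mul_assoc]
      show ((h * h' : GL (Fin 2) R) : Matrix (Fin 2) (Fin 2) R) = _
      calc ((h * h' : GL (Fin 2) R) : Matrix (Fin 2) (Fin 2) R)
          = (((γ : Matrix (Fin 2) (Fin 2) k).map s) * (g₂ : Matrix (Fin 2) (Fin 2) R)
              * ((1 + ϖ * x) • (1 : Matrix (Fin 2) (Fin 2) R)))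
            * (B * (g₂' : Matrix (Fin 2) (Fin 2) R)
              * ((1 + ϖ * x') • (1 : Matrix (Fin 2) (Fin 2) R))) := by
            rw [Units.val_mul, he, he', hB]
        _ = ((1 + ϖ * x) * (1 + ϖ * x')) •
            (((γ : Matrix (Fin 2) (Fin 2) k).map s) * (g₂ : Matrix (Fin 2) (Fin 2) R)
              * (B * (g₂' : Matrix (Fin 2) (Fin 2) R))) := by
            simp only [Matrix.mul_smul, Matrix.smul_mul, mul_one, smul_smul]
            rw [mul_comm (1 + ϖ * x') (1 + ϖ * x)]
        _ = (1 + ϖ * (x + x' + ϖ * (x * x'))) •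
            ((((γ : Matrix (Fin 2) (Fin 2) k).map s) * B)
              * (C * (g₂ : Matrix (Fin 2) (Fin 2) R) * B * (g₂' : Matrix (Fin 2) (Fin 2) R))) := by
            rw [hmat]; congr 1; ring
        _ = _ := by
            rw [hγmul, hval, hB, Matrix.mul_smul, mul_one]
    · -- trace congruence
      have hval : ((Γ'⁻¹ * g₂ * Γ' * g₂' : GL (Fin 2) R) : Matrix (Fin 2) (Fin 2) R)
          = C * (g₂ : Matrix (Fin 2) (Fin 2) R) * B * (g₂' : Matrix (Fin 2) (Fin 2) R) := rfl
      set M : Matrix (Fin 2) (Fin 2) R := C * ((g₂ : Matrix (Fin 2) (Fin 2) R) - 1) * B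
        with hMdef
      have hMmem : ∀ i j, M i j ∈ I ^ 2 :=
        aux_mul_mem_right (aux_mul_mem_left hg)
      have e3 : ((Γ'⁻¹ * g₂ * Γ' * g₂' : GL (Fin 2) R) : Matrix (Fin 2) (Fin 2) R) - 1
          = M + ((g₂' : Matrix (Fin 2) (Fin 2) R) - 1)
            + M * ((g₂' : Matrix (Fin 2) (Fin 2) R) - 1) := by
        have e1 : C * (g₂ : Matrix (Fin 2) (Fin 2) R) * B = M + 1 := by
          rw [hMdef, mul_sub, mul_one, sub_mul, hCB, sub_add_cancel]
        rw [hval, e1]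
        have : (g₂' : Matrix (Fin 2) (Fin 2) R)
            = 1 + ((g₂' : Matrix (Fin 2) (Fin 2) R) - 1) := by abel
        rw [this]
        noncomm_ring
      have htrM : Matrix.trace M = Matrix.trace ((g₂ : Matrix (Fin 2) (Fin 2) R) - 1) := by
        rw [hMdef, Matrix.trace_mul_comm, ← mul_assoc, hBC, one_mul]
      have htrMB : Matrix.trace (M * ((g₂' : Matrix (Fin 2) (Fin 2) R) - 1)) ∈ I ^ 3 := by
        apply hI43
        exact aux_trace_mem (aux_mul_mem_mul hMmem hg')
      have hid : Matrix.trace (((Γ'⁻¹ * g₂ * Γ' * g₂' : GL (Fin 2) R)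
            : Matrix (Fin 2) (Fin 2) R) - 1)
          - (Matrix.trace ((g₂ : Matrix (Fin 2) (Fin 2) R) - 1)
            + Matrix.trace ((g₂' : Matrix (Fin 2) (Fin 2) R) - 1))
          = Matrix.trace (M * ((g₂' : Matrix (Fin 2) (Fin 2) R) - 1)) := by
        rw [e3, Matrix.trace_add, Matrix.trace_add, htrM]
        ring
      rw [hid]
      exact htrMB
  -- define f and conclude
  refine ⟨fun h =>
    if hc : ∃ d : (GL (Fin 2) k) × (GL (Fin 2) R) × R, IsDecomp R k s ϖ h d.1 d.2.1 d.2.2 then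
      Ideal.Quotient.mk (IsLocalRing.maximalIdeal R ^ 3)
        (Matrix.trace ((hc.choose.2.1 : Matrix (Fin 2) (Fin 2) R) - 1))
    else 0, ?_, ?_, ?_⟩
  · intro h _ γ g₂ x hd
    have hex : ∃ d : (GL (Fin 2) k) × (GL (Fin 2) R) × R,
        IsDecomp R k s ϖ h d.1 d.2.1 d.2.2 := ⟨⟨γ, g₂, x⟩, hd⟩
    simp only [dif_pos hex]
    exact key h hex.choose.1 hex.choose.2.1 hex.choose.2.2 γ g₂ x hex.choose_spec hd
  · intro h hh
    obtain ⟨γ, g₂, x, hd⟩ := hH h hh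
    refine ⟨Matrix.trace ((g₂ : Matrix (Fin 2) (Fin 2) R) - 1), aux_trace_mem hd.1, ?_⟩
    have hex : ∃ d : (GL (Fin 2) k) × (GL (Fin 2) R) × R,
        IsDecomp R k s ϖ h d.1 d.2.1 d.2.2 := ⟨⟨γ, g₂, x⟩, hd⟩
    simp only [dif_pos hex]
    exact key h hex.choose.1 hex.choose.2.1 hex.choose.2.2 γ g₂ x hex.choose_spec hd
  · intro h hh h' hh'
    obtain ⟨γ, g₂, x, hd⟩ := hH h hh
    obtain ⟨γ', g₂', x', hd'⟩ := hH h' hh'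
    obtain ⟨g'', hd'', htrace⟩ := mul_decomp h h' γ γ' g₂ g₂' x x' hd hd'
    have hex : ∃ d : (GL (Fin 2) k) × (GL (Fin 2) R) × R,
        IsDecomp R k s ϖ h d.1 d.2.1 d.2.2 := ⟨⟨γ, g₂, x⟩, hd⟩
    have hex' : ∃ d : (GL (Fin 2) k) × (GL (Fin 2) R) × R,
        IsDecomp R k s ϖ h' d.1 d.2.1 d.2.2 := ⟨⟨γ', g₂', x'⟩, hd'⟩
    have hexm : ∃ d : (GL (Fin 2) k) × (GL (Fin 2) R) × R,
        IsDecomp R k s ϖ (h * h') d.1 d.2.1 d.2.2 := ⟨⟨γ * γ', g'', x + x' + ϖ * (x * x')⟩, hd''⟩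
    simp only [dif_pos hexm, dif_pos hex, dif_pos hex']
    have h1 := key h hex.choose.1 hex.choose.2.1 hex.choose.2.2 γ g₂ x hex.choose_spec hd
    have h2 := key h' hex'.choose.1 hex'.choose.2.1 hex'.choose.2.2 γ' g₂' x' hex'.choose_spec hd'
    have h3 := key (h * h') hexm.choose.1 hexm.choose.2.1 hexm.choose.2.2 (γ * γ') g'' _
      hexm.choose_spec hd''
    rw [h1, h2, h3]
    rw [← map_add]
    exact (Ideal.Quotient.mk_eq_mk_iff_sub_mem _ _).mpr htrace
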